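/- Let δ ∈ (0,1) and F > 0 be given, and run Subgradient Descent from x̂⁰ ∈ Q with step-sizes α_j := δ(f(x̂⁰) − f_slb)/(F‖g_j‖²) (with α_j := 0 if g_j = 0, in which case x^j is optimal), where every chosen subgradient satisfies ‖g_j‖ ≤ M. Then for all j ≥ 0: f_b^j − f_slb ≤ f* − f_slb + [ G²M²F/(2δ(j+1)) + δ/(2F) ]·(f(x̂⁰) − f_slb). -/

import Mathlib

open scoped RealInnerProductSpace Classical

/-- `p` is the Euclidean projection of `u` onto `Q`. -/
def IsProj {n : ℕ} (Q : Set (EuclideanSpace ℝ (Fin n)))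
    (u p : EuclideanSpace ℝ (Fin n)) : Prop :=
  p ∈ Q ∧ ∀ w ∈ Q, dist p u ≤ dist w u

lemma proj_sq_le {n : ℕ} {Q : Set (EuclideanSpace ℝ (Fin n))} (hQcv : Convex ℝ Q)
    {u p z : EuclideanSpace ℝ (Fin n)} (hz : z ∈ Q) (h : IsProj Q u p) :
    ‖p - z‖ ^ 2 ≤ ‖u - z‖ ^ 2 := by
  have hne : Nonempty ↥Q := ⟨⟨p, h.1⟩⟩
  have hinf : ‖u - p‖ = ⨅ w : Q, ‖u - w‖ := by
    apply le_antisymm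
    · refine le_ciInf fun w => ?_
      have := h.2 w w.2
      simp only [dist_eq_norm] at this
      calc ‖u - p‖ = ‖p - u‖ := (norm_sub_rev p u).symm
        _ ≤ ‖(w : EuclideanSpace ℝ (Fin n)) - u‖ := this
        _ = ‖u - w‖ := norm_sub_rev _ _
    · have hbdd : BddBelow (Set.range fun w : Q => ‖u - w‖) := by
        refine ⟨0, ?_⟩
        rintro y ⟨w, rfl⟩
        exact norm_nonneg _
      exact ciInf_le hbdd ⟨p, h.1⟩
  have hiff := (norm_eq_iInf_iff_real_inner_le_zero hQcv h.1).mp hinf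
  have h1 : ⟪u - p, z - p⟫ ≤ 0 := hiff z hz
  have hexp : ‖u - z‖ ^ 2 = ‖u - p‖ ^ 2 + 2 * ⟪u - p, p - z⟫ + ‖p - z‖ ^ 2 := by
    have heq : u - z = (u - p) + (p - z) := by abel
    rw [heq, norm_add_sq_real]
  have h2 : ⟪u - p, p - z⟫ = -⟪u - p, z - p⟫ := by
    rw [show p - z = -(z - p) by abel, inner_neg_right]
  nlinarith [sq_nonneg ‖u - p‖]

set_option maxHeartbeats 1600000 in
/-- Proposition 1: Subgradient Descent with step-sizes
`α_j = δ(f(x̂⁰) − f_slb)/(F‖g_j‖²)`. -/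
theorem subgradient_descent_slb_step {n : ℕ} (Q : Set (EuclideanSpace ℝ (Fin n)))
    (hQne : Q.Nonempty) (hQcl : IsClosed Q) (hQcv : Convex ℝ Q)
    (f : EuclideanSpace ℝ (Fin n) → ℝ) (hfc : ConvexOn ℝ Q f)
    (fstar : ℝ) (hattain : ∃ z ∈ Q, f z = fstar) (hmin : ∀ z ∈ Q, fstar ≤ f z)
    (fslb : ℝ) (hslb : fslb < fstar)
    (G M : ℝ) (hG : 0 < G)
    (hgrow : ∀ z ∈ Q, Metric.infDist z {w ∈ Q | f w = fstar} ≤ G * (f z - fslb))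
    (δ F : ℝ) (hδ : δ ∈ Set.Ioo (0 : ℝ) 1) (hF : 0 < F)
    (x g : ℕ → EuclideanSpace ℝ (Fin n)) (α : ℕ → ℝ)
    (hx0 : x 0 ∈ Q)
    (hsub : ∀ j, ∀ w ∈ Q, f (x j) + ⟪g j, w - x j⟫ ≤ f w)
    (hgM : ∀ j, ‖g j‖ ≤ M)
    (hα : ∀ j, α j = if g j = 0 then 0 else δ * (f (x 0) - fslb) / (F * ‖g j‖ ^ 2))
    (hupd : ∀ j, IsProj Q (x j - α j • g j) (x (j + 1)))
    (j : ℕ) :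
    (Finset.range (j + 1)).inf' Finset.nonempty_range_add_one (fun l => f (x l)) - fslb ≤
      fstar - fslb +
        (G ^ 2 * M ^ 2 * F / (2 * δ * ((j : ℝ) + 1)) + δ / (2 * F)) * (f (x 0) - fslb) := by
  obtain ⟨z₀, hz₀Q, hz₀f⟩ := hattain
  obtain ⟨hδ0, hδ1⟩ := hδ
  set A : ℝ := f (x 0) - fslb with hA_def
  have hA : 0 < A := by
    have := hmin (x 0) hx0
    simp only [hA_def]; linarith
  set c : ℝ := δ * A / F with hc_def
  have hc : 0 < c := by positivity
  set P : ℝ := (j : ℝ) + 1 with hP_def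
  have hP : 0 < P := by positivity
  set b : ℝ := (Finset.range (j + 1)).inf' Finset.nonempty_range_add_one (fun l => f (x l))
    with hb_def
  have hb_le : ∀ l ∈ Finset.range (j + 1), b ≤ f (x l) := fun l hl => Finset.inf'_le _ hl
  have hM0 : 0 ≤ M := le_trans (norm_nonneg _) (hgM 0)
  have hGterm : 0 ≤ G ^ 2 * M ^ 2 * F / (2 * δ * P) * A := by
    apply mul_nonneg _ hA.le
    apply div_nonneg (by positivity)
    nlinarith
  have hc2 : δ / (2 * F) * A = c / 2 := by
    rw [hc_def]; field_simp
  -- membership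
  have hxQ : ∀ l, x l ∈ Q := by
    intro l
    induction l with
    | zero => exact hx0
    | succ k ih => exact (hupd k).1
  -- nonnegativity of step sizes
  have hα0 : ∀ l, 0 ≤ α l := by
    intro l
    rw [hα l]
    split
    · exact le_rfl
    · exact div_nonneg (by nlinarith) (by positivity)
  -- per-step inequality
  have hstep : ∀ (z : EuclideanSpace ℝ (Fin n)), z ∈ Q → f z = fstar → ∀ l,
      ‖x (l + 1) - z‖ ^ 2 ≤ ‖x l - z‖ ^ 2 - 2 * α l * (f (x l) - fstar)
        + (α l) ^ 2 * ‖g l‖ ^ 2 := by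
    intro z hzQ hzf l
    have hp := proj_sq_le hQcv hzQ (hupd l)
    have hexp : ‖(x l - α l • g l) - z‖ ^ 2
        = ‖x l - z‖ ^ 2 - 2 * (α l * ⟪g l, x l - z⟫) + (α l) ^ 2 * ‖g l‖ ^ 2 := by
      have heq : (x l - α l • g l) - z = (x l - z) - α l • g l := by abel
      rw [heq, norm_sub_sq_real, real_inner_smul_right, norm_smul, real_inner_comm]
      simp [mul_pow, sq_abs]
    have hsg : f (x l) - fstar ≤ ⟪g l, x l - z⟫ := by
      have h1 := hsub l z hzQ
      have h2 : ⟪g l, z - x l⟫ = -⟪g l, x l - z⟫ := by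
        rw [show z - x l = -(x l - z) by abel, inner_neg_right]
      rw [hzf] at h1
      linarith [h2 ▸ h1]
    nlinarith [mul_le_mul_of_nonneg_left hsg (hα0 l), hp, hexp]
  -- summed inequality
  have hsum : ∀ (z : EuclideanSpace ℝ (Fin n)), z ∈ Q → f z = fstar → ∀ k,
      ∑ l ∈ Finset.range (k + 1), (2 * α l * (f (x l) - fstar) - (α l) ^ 2 * ‖g l‖ ^ 2)
        ≤ ‖x 0 - z‖ ^ 2 - ‖x (k + 1) - z‖ ^ 2 := by
    intro z hzQ hzf k
    induction k with
    | zero =>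
      rw [Finset.sum_range_one]
      linarith [hstep z hzQ hzf 0]
    | succ k ih =>
      rw [Finset.sum_range_succ]
      linarith [hstep z hzQ hzf (k + 1)]
  by_cases h0 : ∃ l ∈ Finset.range (j + 1), g l = 0
  · -- some iterate is optimal
    obtain ⟨l, hl, hgl⟩ := h0
    have hfl : f (x l) = fstar := by
      have h1 := hsub l z₀ hz₀Q
      rw [hgl] at h1
      simp only [inner_zero_left] at h1
      have := hmin (x l) (hxQ l)
      linarith [hz₀f ▸ h1]
    have : b ≤ fstar := hfl ▸ hb_le l hl
    have : c / 2 ≤ (G ^ 2 * M ^ 2 * F / (2 * δ * P) + δ / (2 * F)) * A := by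
      rw [add_mul, hc2]; linarith
    linarith
  · push_neg at h0
    have hgne : ∀ l ∈ Finset.range (j + 1), g l ≠ 0 := h0
    have hM : 0 < M := by
      have h1 : g 0 ≠ 0 := hgne 0 (Finset.mem_range.mpr (Nat.succ_pos j))
      have := norm_pos_iff.mpr h1
      linarith [hgM 0]
    have hαeq : ∀ l ∈ Finset.range (j + 1), α l = c / ‖g l‖ ^ 2 := by
      intro l hl
      rw [hα l, if_neg (hgne l hl), hc_def, div_div]
    by_cases h2 : 2 * (b - fstar) ≤ c
    · -- small gap case
      have : c / 2 ≤ (G ^ 2 * M ^ 2 * F / (2 * δ * P) + δ / (2 * F)) * A := by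
        rw [add_mul, hc2]; linarith
      linarith
    · push_neg at h2
      set S : ℝ := ∑ l ∈ Finset.range (j + 1), α l with hS_def
      have hSge : P * c / M ^ 2 ≤ S := by
        have h1 : P * c / M ^ 2 = ∑ _l ∈ Finset.range (j + 1), c / M ^ 2 := by
          rw [Finset.sum_const, Finset.card_range, hP_def, nsmul_eq_mul]
          push_cast; ring
        rw [h1, hS_def]
        apply Finset.sum_le_sum
        intro l hl
        rw [hαeq l hl]
        have hgl : (0:ℝ) < ‖g l‖ ^ 2 := by
          have := norm_pos_iff.mpr (hgne l hl)
          positivity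
        have hgm2 : ‖g l‖ ^ 2 ≤ M ^ 2 := by nlinarith [hgM l, norm_nonneg (g l)]
        rw [div_le_div_iff₀ (by positivity) hgl]
        nlinarith [hgm2, hc]
      -- each z in Opt gives a lower bound on distance
      have hchain : ∀ (z : EuclideanSpace ℝ (Fin n)), z ∈ Q → f z = fstar →
          (2 * (b - fstar) - c) * (P * c) / M ^ 2 ≤ ‖x 0 - z‖ ^ 2 := by
        intro z hzQ hzf
        have h1 := hsum z hzQ hzf j
        have h2' : ∑ l ∈ Finset.range (j + 1),
            (2 * α l * (b - fstar) - (α l) ^ 2 * ‖g l‖ ^ 2)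
            ≤ ∑ l ∈ Finset.range (j + 1),
            (2 * α l * (f (x l) - fstar) - (α l) ^ 2 * ‖g l‖ ^ 2) := by
          apply Finset.sum_le_sum
          intro l hl
          have := hb_le l hl
          nlinarith [hα0 l]
        have hterm : ∀ l ∈ Finset.range (j + 1),
            2 * α l * (b - fstar) - (α l) ^ 2 * ‖g l‖ ^ 2 = α l * (2 * (b - fstar) - c) := by
          intro l hl
          have hgl : (0:ℝ) < ‖g l‖ ^ 2 := by
            have := norm_pos_iff.mpr (hgne l hl); positivity
          have hac : α l * ‖g l‖ ^ 2 = c := by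
            rw [hαeq l hl]; field_simp
            exact div_self (norm_pos_iff.mpr (hgne l hl)).ne'
          linear_combination (-(α l)) * hac
        have h3 : ∑ l ∈ Finset.range (j + 1),
            (2 * α l * (b - fstar) - (α l) ^ 2 * ‖g l‖ ^ 2)
            = S * (2 * (b - fstar) - c) := by
          rw [Finset.sum_congr rfl hterm, ← Finset.sum_mul]
        have h4 : S * (2 * (b - fstar) - c) ≤ ‖x 0 - z‖ ^ 2 := by
          have hn := sq_nonneg ‖x (j + 1) - z‖
          linarith [h3 ▸ (le_trans h2' h1)]
        have h5 : (P * c / M ^ 2) * (2 * (b - fstar) - c) ≤ S * (2 * (b - fstar) - c) :=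
          mul_le_mul_of_nonneg_right hSge (by linarith)
        calc (2 * (b - fstar) - c) * (P * c) / M ^ 2
            = (P * c / M ^ 2) * (2 * (b - fstar) - c) := by ring
          _ ≤ ‖x 0 - z‖ ^ 2 := le_trans h5 h4
      set K : ℝ := (2 * (b - fstar) - c) * (P * c) / M ^ 2 with hK_def
      have hKpos : 0 < K := by
        apply div_pos _ (by positivity)
        apply mul_pos (by linarith) (by positivity)
      have hOptne : Set.Nonempty {w ∈ Q | f w = fstar} := ⟨z₀, hz₀Q, hz₀f⟩
      have hsqrt : Real.sqrt K ≤ Metric.infDist (x 0) {w ∈ Q | f w = fstar} := by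
        by_contra hlt
        push_neg at hlt
        obtain ⟨y, hy, hdy⟩ := (Metric.infDist_lt_iff hOptne).mp hlt
        have hKy : Real.sqrt K ≤ dist (x 0) y := by
          rw [dist_eq_norm]
          have := hchain y hy.1 hy.2
          calc Real.sqrt K ≤ Real.sqrt (‖x 0 - y‖ ^ 2) := Real.sqrt_le_sqrt this
            _ = ‖x 0 - y‖ := Real.sqrt_sq (norm_nonneg _)
        linarith
      have hR : Metric.infDist (x 0) {w ∈ Q | f w = fstar} ≤ G * A := hgrow (x 0) hx0
      have hKR : Real.sqrt K ≤ G * A := le_trans hsqrt hR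
      have hK_le : K ≤ (G * A) ^ 2 := by
        nlinarith [Real.sq_sqrt hKpos.le, Real.sqrt_nonneg K]
      have hfin : (2 * (b - fstar) - c) * (P * c) ≤ (G * A) ^ 2 * M ^ 2 := by
        rw [hK_def] at hK_le
        have := (div_le_iff₀ (by positivity : (0:ℝ) < M ^ 2)).mp hK_le
        linarith
      -- now the final arithmetic
      have hfin2 : (2 * (b - fstar) * F - δ * A) * (P * δ * A)
          ≤ G ^ 2 * A ^ 2 * M ^ 2 * F ^ 2 := by
        rw [hc_def] at hfin
        have hmul := mul_le_mul_of_nonneg_right hfin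
          (le_of_lt (by positivity : (0:ℝ) < F ^ 2))
        calc (2 * (b - fstar) * F - δ * A) * (P * δ * A)
            = (2 * (b - fstar) - δ * A / F) * (P * (δ * A / F)) * F ^ 2 := by
              field_simp
          _ ≤ (G * A) ^ 2 * M ^ 2 * F ^ 2 := hmul
          _ = G ^ 2 * A ^ 2 * M ^ 2 * F ^ 2 := by ring
      have hgoal : b - fstar ≤ G ^ 2 * M ^ 2 * F * A / (2 * δ * P) + δ * A / (2 * F) := by
        rw [div_add_div _ _ (by positivity) (by positivity), le_div_iff₀ (by positivity)]
        nlinarith [hfin2, hA, hP, hδ0]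
      have heq2 : G ^ 2 * M ^ 2 * F * A / (2 * δ * P) + δ * A / (2 * F)
          = (G ^ 2 * M ^ 2 * F / (2 * δ * P) + δ / (2 * F)) * A := by
        field_simp
      linarith [heq2 ▸ hgoal]
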